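/- Let R be a ring satisfying (SR_r), let q be a two-sided ideal of R, and let n ≥ r. Let v, v' ∈ R^n be unimodular vectors reducing to the same vector in (R/q)^n. Then there exists M ∈ EL_n(R, q) with M·v = v'. -/

import Mathlib

open Matrix

/-- A vector `v ∈ Rⁿ` is *unimodular* if some homomorphism of right `R`-modules
`φ : Rⁿ → R` sends it to `1`.  Right `R`-modules are encoded as modules over `Rᵐᵒᵖ`. -/
def IsUnimodular {n : ℕ} (R : Type) [Ring R] (v : Fin n → R) : Prop :=
  ∃ φ : (Fin n → R) →ₗ[Rᵐᵒᵖ] R, φ v = 1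

/-- Bass's stable rank condition `(SR_r)`: for all `n ≥ r` and every unimodular
`(c₁, …, cₙ) ∈ Rⁿ` there are `b₁, …, b_{n-1} ∈ R` such that
`(c₁ + b₁ cₙ, …, c_{n-1} + b_{n-1} cₙ)` is unimodular. -/
def SatisfiesSR (R : Type) [Ring R] (r : ℕ) : Prop :=
  ∀ n : ℕ, r ≤ n + 1 → ∀ c : Fin (n + 1) → R, IsUnimodular R c →
    ∃ b : Fin n → R,
      IsUnimodular R (fun i : Fin n => c i.castSucc + b i * c (Fin.last n))

/-- An elementary matrix differs from the identity at exactly one off-diagonal entry. -/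
def IsElementaryMatrix {R : Type} [Ring R] {n : ℕ} (A : Matrix (Fin n) (Fin n) R) : Prop :=
  ∃ i j : Fin n, i ≠ j ∧ ∃ x : R, A = 1 + Matrix.single i j x

/-- `EL_n(R)`: the subgroup of `GL_n(R)` generated by the elementary matrices. -/
def ElementarySubgroup (R : Type) [Ring R] (n : ℕ) : Subgroup ((Matrix (Fin n) (Fin n) R)ˣ) :=
  Subgroup.closure {M : (Matrix (Fin n) (Fin n) R)ˣ | IsElementaryMatrix M.val}

/-- An elementary matrix whose single off-diagonal entry lies in the two-sided ideal `q`. -/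
def IsQElementaryMatrix {R : Type} [Ring R] (q : TwoSidedIdeal R) {n : ℕ}
    (A : Matrix (Fin n) (Fin n) R) : Prop :=
  ∃ i j : Fin n, i ≠ j ∧ ∃ x : R, x ∈ q ∧ A = 1 + Matrix.single i j x

/-- `EL_n(R, q)`: the subgroup of `EL_n(R)` normally generated (in `EL_n(R)`) by the
elementary matrices whose off-diagonal entry lies in `q`; equivalently, the subgroup
generated by all `EL_n(R)`-conjugates of such elementary matrices. -/
def CongruenceElementarySubgroup (R : Type) [Ring R] (n : ℕ) (q : TwoSidedIdeal R) :
    Subgroup (Matrix (Fin n) (Fin n) R)ˣ :=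
  Subgroup.closure {g : (Matrix (Fin n) (Fin n) R)ˣ |
    ∃ e : (Matrix (Fin n) (Fin n) R)ˣ, IsQElementaryMatrix q e.val ∧
      ∃ h ∈ ElementarySubgroup R n, g = h * e * h⁻¹}

section Helpers
variable {R : Type} [Ring R] {N : ℕ}

lemma elUnit_aux (i j : Fin N) (hij : i ≠ j) (x y : R) (hxy : x + y = 0) :
    (1 + Matrix.single i j x) * (1 + Matrix.single i j y) = 1 := by
  have h0 : Matrix.single i j x * Matrix.single i j y = 0 :=
    Matrix.single_mul_single_of_ne _ _ _ _ (Ne.symm hij) _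
  rw [mul_add, mul_one, add_mul, one_mul, h0, add_zero, add_assoc,
    ← Matrix.single_add, hxy]
  simp

/-- The elementary matrix `1 + x E_{ij}` as a unit. -/
def elUnit (i j : Fin N) (hij : i ≠ j) (x : R) : (Matrix (Fin N) (Fin N) R)ˣ where
  val := 1 + Matrix.single i j x
  inv := 1 + Matrix.single i j (-x)
  val_inv := elUnit_aux i j hij x (-x) (by simp)
  inv_val := elUnit_aux i j hij (-x) x (by simp)

lemma elUnit_val (i j : Fin N) (hij : i ≠ j) (x : R) :
    (elUnit i j hij x).val = 1 + Matrix.single i j x := rfl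

lemma elUnit_mulVec (i j : Fin N) (hij : i ≠ j) (x : R) (v : Fin N → R) :
    (elUnit i j hij x).val.mulVec v = fun k => v k + if k = i then x * v j else 0 := by
  funext k
  rw [elUnit_val, Matrix.add_mulVec, Matrix.one_mulVec, Matrix.single_mulVec]
  simp [Function.update, eq_comm]

lemma elUnit_mem_EL (i j : Fin N) (hij : i ≠ j) (x : R) :
    elUnit i j hij x ∈ ElementarySubgroup R N :=
  Subgroup.subset_closure ⟨i, j, hij, x, rfl⟩

lemma elUnit_mem_CE (q : TwoSidedIdeal R) (i j : Fin N) (hij : i ≠ j) (x : R) (hx : x ∈ q) :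
    elUnit i j hij x ∈ CongruenceElementarySubgroup R N q :=
  Subgroup.subset_closure ⟨elUnit i j hij x, ⟨i, j, hij, x, hx, rfl⟩, 1, one_mem _,
    by rw [one_mul, inv_one, mul_one]⟩

lemma conj_mem_CE (q : TwoSidedIdeal R) {h M : (Matrix (Fin N) (Fin N) R)ˣ}
    (hh : h ∈ ElementarySubgroup R N) (hM : M ∈ CongruenceElementarySubgroup R N q) :
    h⁻¹ * M * h ∈ CongruenceElementarySubgroup R N q := by
  induction hM using Subgroup.closure_induction with
  | mem g hg =>
    obtain ⟨e, he, k, hk, rfl⟩ := hg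
    refine Subgroup.subset_closure ⟨e, he, h⁻¹ * k, mul_mem (inv_mem hh) hk, by group⟩
  | one => simpa using one_mem _
  | mul a b _ _ ha hb =>
    have : h⁻¹ * (a * b) * h = (h⁻¹ * a * h) * (h⁻¹ * b * h) := by group
    rw [this]; exact mul_mem ha hb
  | inv a _ ha =>
    have : h⁻¹ * a⁻¹ * h = (h⁻¹ * a * h)⁻¹ := by group
    rw [this]; exact inv_mem ha

end Helpers

section Reach
variable {R : Type} [Ring R] {N : ℕ} (q : TwoSidedIdeal R)

/-- Reachability under the congruence elementary subgroup. -/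
def CReach (a b : Fin N → R) : Prop :=
  ∃ M ∈ CongruenceElementarySubgroup R N q, M.val.mulVec a = b

/-- Reachability under the elementary subgroup. -/
def EReach (a b : Fin N → R) : Prop :=
  ∃ h ∈ ElementarySubgroup R N, h.val.mulVec a = b

variable {q}

lemma CReach.refl (a : Fin N → R) : CReach q a a :=
  ⟨1, one_mem _, by simp⟩

lemma CReach.trans {a b c : Fin N → R} (h1 : CReach q a b) (h2 : CReach q b c) :
    CReach q a c := by
  obtain ⟨M, hM, rfl⟩ := h1
  obtain ⟨M', hM', rfl⟩ := h2
  exact ⟨M' * M, mul_mem hM' hM, by rw [Units.val_mul, ← Matrix.mulVec_mulVec]⟩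

lemma EReach.refl (a : Fin N → R) : EReach a a :=
  ⟨1, one_mem _, by simp⟩

lemma EReach.trans {a b c : Fin N → R} (h1 : EReach a b) (h2 : EReach b c) :
    EReach a c := by
  obtain ⟨M, hM, rfl⟩ := h1
  obtain ⟨M', hM', rfl⟩ := h2
  exact ⟨M' * M, mul_mem hM' hM, by rw [Units.val_mul, ← Matrix.mulVec_mulVec]⟩

/-- a single q-elementary row operation. -/
lemma CReach.single {i j : Fin N} (hij : i ≠ j) {x : R} (hx : x ∈ q) (a : Fin N → R) :
    CReach q a (fun k => a k + if k = i then x * a j else 0) :=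
  ⟨elUnit i j hij x, elUnit_mem_CE q i j hij x hx, elUnit_mulVec i j hij x a⟩

/-- a single elementary row operation. -/
lemma EReach.single {i j : Fin N} (hij : i ≠ j) (x : R) (a : Fin N → R) :
    EReach a (fun k => a k + if k = i then x * a j else 0) :=
  ⟨elUnit i j hij x, elUnit_mem_EL i j hij x, elUnit_mulVec i j hij x a⟩

/-- transport of CReach along an elementary transformation. -/
lemma CReach.transport {h : (Matrix (Fin N) (Fin N) R)ˣ} (hh : h ∈ ElementarySubgroup R N)
    {a b : Fin N → R} (hr : CReach q (h.val.mulVec a) (h.val.mulVec b)) : CReach q a b := by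
  obtain ⟨M, hM, hMv⟩ := hr
  refine ⟨h⁻¹ * M * h, conj_mem_CE q hh hM, ?_⟩
  have e1 : (h⁻¹ * M * h).val = (h⁻¹).val * (M.val * h.val) := by
    rw [Units.val_mul, Units.val_mul, mul_assoc]
  rw [e1, ← Matrix.mulVec_mulVec, ← Matrix.mulVec_mulVec, hMv, Matrix.mulVec_mulVec,
    Units.inv_mul, Matrix.one_mulVec]

/-- transport along a single elementary row operation. -/
lemma CReach.transport_single {i j : Fin N} (hij : i ≠ j) (x : R) {a b : Fin N → R}
    (hr : CReach q (fun k => a k + if k = i then x * a j else 0)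
      (fun k => b k + if k = i then x * b j else 0)) : CReach q a b := by
  refine CReach.transport (elUnit_mem_EL i j hij x) ?_
  rwa [elUnit_mulVec, elUnit_mulVec]

end Reach

section Sums
variable {R : Type} [Ring R] {N : ℕ} {q : TwoSidedIdeal R}

private lemma gen_row {Rel : (Fin N → R) → (Fin N → R) → Prop}
    (hrefl : ∀ a, Rel a a) (htrans : ∀ {a b c}, Rel a b → Rel b c → Rel a c)
    (C : R → Prop)
    (hsingle : ∀ {i j : Fin N}, i ≠ j → ∀ {x : R}, C x →
      ∀ a, Rel a (fun k => a k + if k = i then x * a j else 0))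
    (t : Fin N) (s : Finset (Fin N)) (hts : t ∉ s) (c : Fin N → R)
    (hc : ∀ j ∈ s, C (c j)) (a : Fin N → R) :
    Rel a (fun k => a k + if k = t then ∑ j ∈ s, c j * a j else 0) := by
  induction s using Finset.induction_on with
  | empty =>
    have : (fun k => a k + if k = t then (∑ j ∈ (∅ : Finset (Fin N)), c j * a j) else 0) = a := by
      funext k; simp
    rw [this]; exact hrefl a
  | @insert j s hj ih =>
    rw [Finset.mem_insert, not_or] at hts
    have h1 := ih hts.2 (fun j hj => hc j (Finset.mem_insert_of_mem hj))
    set a1 : Fin N → R := fun k => a k + if k = t then ∑ j ∈ s, c j * a j else 0 with ha1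
    have h2 := hsingle hts.1 (hc j (Finset.mem_insert_self j s)) a1
    have e : (fun k => a1 k + if k = t then c j * a1 j else 0)
        = (fun k => a k + if k = t then ∑ j' ∈ insert j s, c j' * a j' else 0) := by
      funext k
      by_cases hk : k = t
      · simp only [ha1, if_pos hk, if_neg (Ne.symm hts.1), Finset.sum_insert hj, add_zero]
        abel
      · simp [ha1, hk]
    rw [e] at h2
    exact htrans h1 h2

private lemma gen_col {Rel : (Fin N → R) → (Fin N → R) → Prop}
    (hrefl : ∀ a, Rel a a) (htrans : ∀ {a b c}, Rel a b → Rel b c → Rel a c)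
    (C : R → Prop)
    (hsingle : ∀ {i j : Fin N}, i ≠ j → ∀ {x : R}, C x →
      ∀ a, Rel a (fun k => a k + if k = i then x * a j else 0))
    (t : Fin N) (s : Finset (Fin N)) (hts : t ∉ s) (c : Fin N → R)
    (hc : ∀ j ∈ s, C (c j)) (a : Fin N → R) :
    Rel a (fun k => a k + if k ∈ s then c k * a t else 0) := by
  induction s using Finset.induction_on with
  | empty =>
    have : (fun k => a k + if k ∈ (∅ : Finset (Fin N)) then c k * a t else 0) = a := by
      funext k; simp
    rw [this]; exact hrefl a
  | @insert j s hj ih =>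
    rw [Finset.mem_insert, not_or] at hts
    have h1 := ih hts.2 (fun j hj => hc j (Finset.mem_insert_of_mem hj))
    set a1 : Fin N → R := fun k => a k + if k ∈ s then c k * a t else 0 with ha1
    have h2 := hsingle (show j ≠ t from fun h => hts.1 h.symm)
      (hc j (Finset.mem_insert_self j s)) a1
    have e : (fun k => a1 k + if k = j then c j * a1 t else 0)
        = (fun k => a k + if k ∈ insert j s then c k * a t else 0) := by
      funext k
      have hat : a1 t = a t := by rw [ha1]; simp [hts.2]
      by_cases hk : k = j
      · subst hk
        rw [hat, ha1]
        simp [hj]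
      · simp [ha1, Finset.mem_insert, hk]
    rw [e] at h2
    exact htrans h1 h2

lemma CReach.row (t : Fin N) (s : Finset (Fin N)) (hts : t ∉ s) (c : Fin N → R)
    (hc : ∀ j ∈ s, c j ∈ q) (a : Fin N → R) :
    CReach q a (fun k => a k + if k = t then ∑ j ∈ s, c j * a j else 0) :=
  gen_row CReach.refl (fun h1 h2 => CReach.trans h1 h2) (· ∈ q)
    (fun {i j} hij {x} hx a => CReach.single hij hx a) t s hts c hc a

lemma CReach.col (t : Fin N) (s : Finset (Fin N)) (hts : t ∉ s) (c : Fin N → R)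
    (hc : ∀ j ∈ s, c j ∈ q) (a : Fin N → R) :
    CReach q a (fun k => a k + if k ∈ s then c k * a t else 0) :=
  gen_col CReach.refl (fun h1 h2 => CReach.trans h1 h2) (· ∈ q)
    (fun {i j} hij {x} hx a => CReach.single hij hx a) t s hts c hc a

lemma EReach.row (t : Fin N) (s : Finset (Fin N)) (hts : t ∉ s) (c : Fin N → R)
    (a : Fin N → R) :
    EReach a (fun k => a k + if k = t then ∑ j ∈ s, c j * a j else 0) :=
  gen_row EReach.refl (fun h1 h2 => EReach.trans h1 h2) (fun _ => True)
    (fun {i j} hij {x} _ a => EReach.single hij x a) t s hts c (fun _ _ => trivial) a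

lemma EReach.col (t : Fin N) (s : Finset (Fin N)) (hts : t ∉ s) (c : Fin N → R)
    (a : Fin N → R) :
    EReach a (fun k => a k + if k ∈ s then c k * a t else 0) :=
  gen_col EReach.refl (fun h1 h2 => EReach.trans h1 h2) (fun _ => True)
    (fun {i j} hij {x} _ a => EReach.single hij x a) t s hts c (fun _ _ => trivial) a

/-- transport of `CReach` along a column of elementary operations. -/
lemma CReach.transport_col (t : Fin N) (s : Finset (Fin N)) (hts : t ∉ s) (c : Fin N → R)
    {a b : Fin N → R}
    (hr : CReach q (fun k => a k + if k ∈ s then c k * a t else 0)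
      (fun k => b k + if k ∈ s then c k * b t else 0)) : CReach q a b := by
  induction s using Finset.induction_on generalizing a b with
  | empty =>
    have ea : (fun k => a k + if k ∈ (∅ : Finset (Fin N)) then c k * a t else 0) = a := by
      funext k; simp
    have eb : (fun k => b k + if k ∈ (∅ : Finset (Fin N)) then c k * b t else 0) = b := by
      funext k; simp
    rwa [ea, eb] at hr
  | @insert j s hj ih =>
    rw [Finset.mem_insert, not_or] at hts
    set a1 : Fin N → R := fun k => a k + if k ∈ s then c k * a t else 0 with ha1
    set b1 : Fin N → R := fun k => b k + if k ∈ s then c k * b t else 0 with hb1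
    have key : ∀ x : Fin N → R,
        (fun k => x k + if k ∈ insert j s then c k * x t else 0)
        = (fun k => (fun k' => x k' + if k' ∈ s then c k' * x t else 0) k
            + if k = j then c j * (fun k' => x k' + if k' ∈ s then c k' * x t else 0) t else 0) := by
      intro x
      funext k
      have hxt : (x t + if t ∈ s then c t * x t else 0) = x t := by simp [hts.2]
      by_cases hk : k = j
      · subst hk
        simp [hj, hts.2]
      · simp [Finset.mem_insert, hk]
    rw [key a, key b] at hr
    have h2 : CReach q a1 b1 :=
      CReach.transport_single (show j ≠ t from fun h => hts.1 h.symm) (c j) hr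
    exact ih hts.2 h2

end Sums

section Unimod
variable {R : Type} [Ring R] {N : ℕ}

lemma isUnimodular_iff (v : Fin N → R) :
    IsUnimodular R v ↔ ∃ z : Fin N → R, z ⬝ᵥ v = 1 := by
  constructor
  · rintro ⟨φ, hφ⟩
    refine ⟨fun i => φ (Pi.single i 1), ?_⟩
    have hv : v = ∑ i, MulOpposite.op (v i) • Pi.single i (1 : R) := by
      funext j
      rw [Finset.sum_apply]
      simp only [Pi.smul_apply, op_smul_eq_mul, Pi.single_apply]
      rw [Finset.sum_eq_single j (fun b _ hb => by simp [Ne.symm hb]) (by simp)]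
      simp
    calc (fun i => φ (Pi.single i 1)) ⬝ᵥ v = ∑ i, φ (Pi.single i 1) * v i := rfl
      _ = ∑ i, φ (MulOpposite.op (v i) • Pi.single i (1:R)) := by
          refine Finset.sum_congr rfl fun i _ => ?_
          rw [LinearMap.map_smul, op_smul_eq_mul]
      _ = φ v := by rw [← map_sum, ← hv]
      _ = 1 := hφ
  · rintro ⟨z, hz⟩
    refine ⟨{ toFun := fun x => z ⬝ᵥ x
              map_add' := fun x y => by simp [dotProduct, mul_add, Finset.sum_add_distrib]
              map_smul' := fun m x => by
                simp only [dotProduct, RingHom.id_apply, MulOpposite.smul_eq_mul_unop,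
                  Pi.smul_apply, ← mul_assoc, Finset.sum_mul] }, hz⟩

lemma dot_mulVec_unimod (M : (Matrix (Fin N) (Fin N) R)ˣ) {v z : Fin N → R} (h : z ⬝ᵥ v = 1) :
    ∃ z' : Fin N → R, z' ⬝ᵥ (M.val.mulVec v) = 1 := by
  refine ⟨vecMul z (M⁻¹).val, ?_⟩
  rw [dotProduct_mulVec, vecMul_vecMul, Units.inv_mul, vecMul_one, h]

lemma isUnimodular_mulVec (M : (Matrix (Fin N) (Fin N) R)ˣ) {v : Fin N → R}
    (h : IsUnimodular R v) : IsUnimodular R (M.val.mulVec v) := by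
  obtain ⟨z, hz⟩ := (isUnimodular_iff v).1 h
  exact (isUnimodular_iff _).2 (dot_mulVec_unimod M hz)

lemma subsingleton_ring_of_SR {r : ℕ} (hSR : SatisfiesSR R r) (hr : r ≤ 1) :
    ∀ a b : R, a = b := by
  have hu : IsUnimodular R (fun _ : Fin 1 => (1 : R)) :=
    ⟨LinearMap.proj 0, rfl⟩
  obtain ⟨b, hb⟩ := hSR 0 hr _ hu
  obtain ⟨ψ, hψ⟩ := hb
  have h0 : (fun i : Fin 0 => (fun _ : Fin 1 => (1:R)) i.castSucc
      + b i * (fun _ : Fin 1 => (1:R)) (Fin.last 0)) = 0 := funext fun i => i.elim0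
  rw [h0, map_zero] at hψ
  intro a b
  calc a = a * 1 := (mul_one a).symm
    _ = a * 0 := by rw [← hψ]
    _ = b * 0 := by rw [mul_zero, mul_zero]
    _ = b * 1 := by rw [hψ]
    _ = b := mul_one b

end Unimod

section Main
variable {R : Type} [Ring R] {m : ℕ} {q : TwoSidedIdeal R}

/-- extend a vector indexed by `Fin (m+1)` to `Fin (m+2)` by `0` at the last place. -/
def extv (b : Fin (m+1) → R) : Fin (m+2) → R :=
  fun k => if hk : k = Fin.last (m+1) then 0 else b (k.castPred hk)

lemma extv_castSucc (b : Fin (m+1) → R) (i : Fin (m+1)) : extv b i.castSucc = b i := by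
  unfold extv
  rw [dif_neg (Fin.castSucc_lt_last i).ne, Fin.castPred_castSucc]

lemma extv_last (b : Fin (m+1) → R) : extv b (Fin.last (m+1)) = 0 := dif_pos rfl

lemma sum_erase_last (g : Fin (m+2) → R) (hg : g (Fin.last (m+1)) = 0) :
    ∑ k ∈ Finset.univ.erase (Fin.last (m+1)), g k = ∑ i : Fin (m+1), g i.castSucc := by
  rw [Finset.sum_erase _ hg, Fin.sum_univ_castSucc, hg, add_zero]

lemma sr_step {r : ℕ} (hSR : SatisfiesSR R r) (hr : r ≤ m + 2) (x : Fin (m+2) → R)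
    (hx : IsUnimodular R x) :
    ∃ c z : Fin (m+2) → R, c (Fin.last (m+1)) = 0 ∧ z (Fin.last (m+1)) = 0 ∧
      ∑ k ∈ Finset.univ.erase (Fin.last (m+1)),
        z k * (x k + c k * x (Fin.last (m+1))) = 1 := by
  obtain ⟨b, hw⟩ := hSR (m+1) hr x hx
  obtain ⟨z0, hz0⟩ := (isUnimodular_iff _).1 hw
  refine ⟨extv b, extv z0, extv_last b, extv_last z0, ?_⟩
  rw [sum_erase_last _ (by rw [extv_last, zero_mul])]
  calc ∑ i : Fin (m+1), extv z0 i.castSucc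
        * (x i.castSucc + extv b i.castSucc * x (Fin.last (m+1)))
      = ∑ i : Fin (m+1), z0 i * (x i.castSucc + b i * x (Fin.last (m+1))) := by
        refine Finset.sum_congr rfl fun i _ => ?_
        rw [extv_castSucc, extv_castSucc]
    _ = 1 := hz0

lemma key_rel (x z : Fin (m+2) → R)
    (hsum : ∑ k ∈ Finset.univ.erase (Fin.last (m+1)), z k * x k = 1)
    (h0 : x 0 - 1 ∈ q) (hq : ∀ k, k ≠ 0 → x k ∈ q) :
    CReach q x (Pi.single 0 1) := by
  have hL0 : (Fin.last (m+1) : Fin (m+2)) ≠ 0 := by simp [Fin.ext_iff]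
  have hLe : (Fin.last (m+1) : Fin (m+2)) ∉ Finset.univ.erase (Fin.last (m+1)) :=
    Finset.notMem_erase _ _
  have h1q : (1 : R) - x 0 ∈ q := by
    have := q.neg_mem h0
    rwa [neg_sub] at this
  have hsL : Pi.single (M := fun _ : Fin (m+2) => R) 0 1 (Fin.last (m+1)) = 0 := by
    simp [hL0]
  have hs0 : Pi.single (M := fun _ : Fin (m+2) => R) 0 1 0 = 1 := by simp
  have hsk : ∀ k : Fin (m+2), k ≠ 0 → Pi.single (M := fun _ : Fin (m+2) => R) 0 1 k = 0 :=
    fun k hk => by simp [hk]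
  -- step a : kill the last coordinate
  have ha : CReach q x (fun k => if k = Fin.last (m+1) then 0 else x k) := by
    have h := CReach.row (q := q) (Fin.last (m+1)) (Finset.univ.erase (Fin.last (m+1))) hLe
      (fun j => (-(x (Fin.last (m+1)))) * z j)
      (fun j _ => q.mul_mem_right _ _ (q.neg_mem (hq _ hL0))) x
    have e : (fun k => x k + if k = Fin.last (m+1)
        then ∑ j ∈ Finset.univ.erase (Fin.last (m+1)), ((-(x (Fin.last (m+1)))) * z j) * x j
        else 0) = (fun k => if k = Fin.last (m+1) then 0 else x k) := by
      have hS : ∑ j ∈ Finset.univ.erase (Fin.last (m+1)),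
          ((-(x (Fin.last (m+1)))) * z j) * x j = -(x (Fin.last (m+1))) := by
        calc ∑ j ∈ Finset.univ.erase (Fin.last (m+1)), ((-(x (Fin.last (m+1)))) * z j) * x j
            = (-(x (Fin.last (m+1)))) * ∑ j ∈ Finset.univ.erase (Fin.last (m+1)), z j * x j := by
              rw [Finset.mul_sum]
              exact Finset.sum_congr rfl fun j _ => (mul_assoc _ _ _)
          _ = -(x (Fin.last (m+1))) := by rw [hsum, mul_one]
      funext k
      by_cases hk : k = Fin.last (m+1)
      · simp only [hk, if_true, hS]
        abel
      · simp only [if_neg hk, add_zero]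
    rwa [e] at h
  -- step b : set the last coordinate to 1 - x 0
  have hb : CReach q (fun k => if k = Fin.last (m+1) then 0 else x k)
      (fun k => if k = Fin.last (m+1) then 1 - x 0 else x k) := by
    have h := CReach.row (q := q) (Fin.last (m+1)) (Finset.univ.erase (Fin.last (m+1))) hLe
      (fun j => (1 - x 0) * z j) (fun j _ => q.mul_mem_right _ _ h1q)
      (fun k => if k = Fin.last (m+1) then 0 else x k)
    have e : (fun k => (if k = Fin.last (m+1) then 0 else x k) + if k = Fin.last (m+1)
        then ∑ j ∈ Finset.univ.erase (Fin.last (m+1)), ((1 - x 0) * z j)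
          * (if j = Fin.last (m+1) then 0 else x j)
        else 0) = (fun k => if k = Fin.last (m+1) then 1 - x 0 else x k) := by
      have hS : ∑ j ∈ Finset.univ.erase (Fin.last (m+1)), ((1 - x 0) * z j)
          * (if j = Fin.last (m+1) then 0 else x j) = 1 - x 0 := by
        calc ∑ j ∈ Finset.univ.erase (Fin.last (m+1)), ((1 - x 0) * z j)
            * (if j = Fin.last (m+1) then 0 else x j)
            = (1 - x 0) * ∑ j ∈ Finset.univ.erase (Fin.last (m+1)), z j * x j := by
              rw [Finset.mul_sum]
              refine Finset.sum_congr rfl fun j hj => ?_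
              rw [if_neg (Finset.mem_erase.1 hj).1, mul_assoc]
          _ = 1 - x 0 := by rw [hsum, mul_one]
      funext k
      by_cases hk : k = Fin.last (m+1)
      · simp only [hk, if_true, hS]
        abel
      · simp only [if_neg hk, add_zero]
    rwa [e] at h
  -- step c : kill the middle coordinates
  have h0s3 : (0 : Fin (m+2)) ∉ ((Finset.univ.erase 0).erase (Fin.last (m+1))) := by
    intro h
    exact (Finset.mem_erase.1 ((Finset.mem_erase.1 h).2)).1 rfl
  have hLs3 : (Fin.last (m+1) : Fin (m+2)) ∉ ((Finset.univ.erase 0).erase (Fin.last (m+1))) :=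
    Finset.notMem_erase _ _
  have hmem_s3 : ∀ k : Fin (m+2), k ∈ ((Finset.univ.erase 0).erase (Fin.last (m+1)))
      → k ≠ 0 ∧ k ≠ Fin.last (m+1) := by
    intro k hk
    exact ⟨(Finset.mem_erase.1 ((Finset.mem_erase.1 hk).2)).1, (Finset.mem_erase.1 hk).1⟩
  have hmem_s3' : ∀ k : Fin (m+2), k ≠ 0 → k ≠ Fin.last (m+1)
      → k ∈ ((Finset.univ.erase 0).erase (Fin.last (m+1))) := by
    intro k hk0 hkL
    exact Finset.mem_erase.2 ⟨hkL, Finset.mem_erase.2 ⟨hk0, Finset.mem_univ k⟩⟩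
  have hc1 : CReach q (fun k => if k = Fin.last (m+1) then 1 - x 0 else x k)
      (fun k => if k = Fin.last (m+1) then 1 - x 0 else if k = 0 then x 0
        else x k + (-(x k)) * x 0) := by
    have h := CReach.col (q := q) 0 ((Finset.univ.erase 0).erase (Fin.last (m+1))) h0s3
      (fun k => -(x k)) (fun k hk => q.neg_mem (hq k (hmem_s3 k hk).1))
      (fun k => if k = Fin.last (m+1) then 1 - x 0 else x k)
    have e : (fun k => (if k = Fin.last (m+1) then 1 - x 0 else x k)
        + if k ∈ ((Finset.univ.erase 0).erase (Fin.last (m+1)))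
          then (-(x k)) * (if (0 : Fin (m+2)) = Fin.last (m+1) then 1 - x 0 else x 0) else 0)
        = (fun k => if k = Fin.last (m+1) then 1 - x 0 else if k = 0 then x 0
            else x k + (-(x k)) * x 0) := by
      funext k
      by_cases hkL : k = Fin.last (m+1)
      · have hk3 : k ∉ ((Finset.univ.erase 0).erase (Fin.last (m+1))) := by
          rw [hkL]; exact hLs3
        simp [hkL, hk3, Ne.symm hL0]
      · by_cases hk0 : k = 0
        · have hk3 : k ∉ ((Finset.univ.erase 0).erase (Fin.last (m+1))) := by
            rw [hk0]; exact h0s3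
          simp [hkL, hk0, hk3, Ne.symm hL0]
        · have hk3 : k ∈ ((Finset.univ.erase 0).erase (Fin.last (m+1))) :=
            hmem_s3' k hk0 hkL
          simp [hkL, hk0, hk3, Ne.symm hL0]
    rwa [e] at h
  have hc2 : CReach q (fun k => if k = Fin.last (m+1) then 1 - x 0 else if k = 0 then x 0
        else x k + (-(x k)) * x 0)
      (fun k => if k = Fin.last (m+1) then 1 - x 0 else if k = 0 then x 0 else 0) := by
    have h := CReach.col (q := q) (Fin.last (m+1))
      ((Finset.univ.erase 0).erase (Fin.last (m+1))) hLs3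
      (fun k => -(x k)) (fun k hk => q.neg_mem (hq k (hmem_s3 k hk).1))
      (fun k => if k = Fin.last (m+1) then 1 - x 0 else if k = 0 then x 0
        else x k + (-(x k)) * x 0)
    have e : (fun k => (if k = Fin.last (m+1) then 1 - x 0 else if k = 0 then x 0
          else x k + (-(x k)) * x 0)
        + if k ∈ ((Finset.univ.erase 0).erase (Fin.last (m+1)))
          then (-(x k)) * (if (Fin.last (m+1) : Fin (m+2)) = Fin.last (m+1) then 1 - x 0
            else if (Fin.last (m+1) : Fin (m+2)) = 0 then x 0
            else x (Fin.last (m+1)) + (-(x (Fin.last (m+1)))) * x 0) else 0)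
        = (fun k => if k = Fin.last (m+1) then 1 - x 0 else if k = 0 then x 0 else 0) := by
      funext k
      by_cases hkL : k = Fin.last (m+1)
      · have hk3 : k ∉ ((Finset.univ.erase 0).erase (Fin.last (m+1))) := by
          rw [hkL]; exact hLs3
        simp [hkL, hk3]
      · by_cases hk0 : k = 0
        · have hk3 : k ∉ ((Finset.univ.erase 0).erase (Fin.last (m+1))) := by
            rw [hk0]; exact h0s3
          simp [hkL, hk0, hk3]
        · have hk3 : k ∈ ((Finset.univ.erase 0).erase (Fin.last (m+1))) :=
            hmem_s3' k hk0 hkL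
          simp only [if_neg hkL, if_neg hk0, if_pos hk3, if_true]
          rw [neg_mul, neg_mul, mul_sub, mul_one]
          abel
    rwa [e] at h
  -- steps d, e : finish
  have hd : CReach q (fun k => if k = Fin.last (m+1) then 1 - x 0 else if k = 0 then x 0 else 0)
      (Pi.single 0 1) := by
    refine CReach.transport_single (show (0 : Fin (m+2)) ≠ Fin.last (m+1) from Ne.symm hL0)
      1 ?_
    have e6 : (fun k => (if k = Fin.last (m+1) then 1 - x 0 else if k = 0 then x 0 else 0)
        + if k = 0 then 1 * (if (Fin.last (m+1) : Fin (m+2)) = Fin.last (m+1) then 1 - x 0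
            else if (Fin.last (m+1) : Fin (m+2)) = 0 then x 0 else 0) else 0)
        = (fun k => if k = Fin.last (m+1) then 1 - x 0 else if k = 0 then 1 else 0) := by
      funext k
      by_cases hk0 : k = 0
      · have hkL : k ≠ Fin.last (m+1) := by rw [hk0]; exact Ne.symm hL0
        simp only [hk0, if_true, one_mul, if_neg (Ne.symm hL0)]
        abel
      · simp only [if_neg hk0, add_zero]
    have e1' : (fun k => Pi.single (M := fun _ : Fin (m+2) => R) 0 1 k
        + if k = 0 then 1 * Pi.single (M := fun _ : Fin (m+2) => R) 0 1 (Fin.last (m+1)) else 0)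
        = Pi.single (M := fun _ : Fin (m+2) => R) 0 1 := by
      funext k
      rw [hsL, mul_zero, ite_self, add_zero]
    rw [e6, e1']
    -- final q-elementary move
    have h := CReach.single (q := q) (show (Fin.last (m+1) : Fin (m+2)) ≠ 0 from hL0)
      (q.neg_mem h1q)
      (fun k => if k = Fin.last (m+1) then 1 - x 0 else if k = 0 then 1 else 0)
    have e : (fun k => (if k = Fin.last (m+1) then 1 - x 0 else if k = 0 then 1 else 0)
        + if k = Fin.last (m+1) then (-(1 - x 0))
            * (if (0 : Fin (m+2)) = Fin.last (m+1) then 1 - x 0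
               else if (0 : Fin (m+2)) = 0 then 1 else 0) else 0)
        = Pi.single 0 1 := by
      funext k
      by_cases hkL : k = Fin.last (m+1)
      · have hk0 : k ≠ 0 := by rw [hkL]; exact hL0
        rw [if_pos hkL, if_pos hkL, if_neg (Ne.symm hL0), if_pos rfl, mul_one, hkL, hsL]
        abel
      · rw [if_neg hkL, if_neg hkL, add_zero]
        by_cases hk0 : k = 0
        · rw [if_pos hk0, hk0, hs0]
        · rw [if_neg hk0, hsk k hk0]
    rwa [e] at h
  exact ((ha.trans hb).trans hc1).trans (hc2.trans hd)

end Main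

section Abs
variable {R : Type} [Ring R] {m : ℕ} {q : TwoSidedIdeal R}

lemma abs_reach {r : ℕ} (hSR : SatisfiesSR R r) (hr : r ≤ m + 2) (v : Fin (m+2) → R)
    (hv : IsUnimodular R v) : EReach v (Pi.single 0 1) := by
  have hL0 : (Fin.last (m+1) : Fin (m+2)) ≠ 0 := by simp [Fin.ext_iff]
  have hLe : (Fin.last (m+1) : Fin (m+2)) ∉ Finset.univ.erase (Fin.last (m+1)) :=
    Finset.notMem_erase _ _
  obtain ⟨c, z, hcL, hzL, hsum⟩ := sr_step hSR hr v hv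
  -- step 1 : shorten
  have h1 : EReach v (fun k => v k + c k * v (Fin.last (m+1))) := by
    have h := EReach.col (Fin.last (m+1)) (Finset.univ.erase (Fin.last (m+1))) hLe c v
    have e : (fun k => v k + if k ∈ Finset.univ.erase (Fin.last (m+1))
        then c k * v (Fin.last (m+1)) else 0)
        = (fun k => v k + c k * v (Fin.last (m+1))) := by
      funext k
      by_cases hk : k = Fin.last (m+1)
      · rw [if_neg (show k ∉ Finset.univ.erase (Fin.last (m+1)) from by rw [hk]; exact hLe), hk, hcL, zero_mul, add_zero]
      · rw [if_pos (Finset.mem_erase.2 ⟨hk, Finset.mem_univ k⟩)]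
    rwa [e] at h
  set w : Fin (m+2) → R := fun k => v k + c k * v (Fin.last (m+1)) with hw
  have hsumw : ∑ k ∈ Finset.univ.erase (Fin.last (m+1)), z k * w k = 1 := hsum
  -- step 2 : make the last coordinate 1
  have h2 : EReach w (fun k => if k = Fin.last (m+1) then 1 else w k) := by
    have h := EReach.row (Fin.last (m+1)) (Finset.univ.erase (Fin.last (m+1))) hLe
      (fun j => (1 - w (Fin.last (m+1))) * z j) w
    have hS : ∑ j ∈ Finset.univ.erase (Fin.last (m+1)),
        ((1 - w (Fin.last (m+1))) * z j) * w j = 1 - w (Fin.last (m+1)) := by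
      calc ∑ j ∈ Finset.univ.erase (Fin.last (m+1)), ((1 - w (Fin.last (m+1))) * z j) * w j
          = (1 - w (Fin.last (m+1)))
            * ∑ j ∈ Finset.univ.erase (Fin.last (m+1)), z j * w j := by
            rw [Finset.mul_sum]
            exact Finset.sum_congr rfl fun j _ => (mul_assoc _ _ _)
        _ = 1 - w (Fin.last (m+1)) := by rw [hsumw, mul_one]
    have e : (fun k => w k + if k = Fin.last (m+1)
        then ∑ j ∈ Finset.univ.erase (Fin.last (m+1)), ((1 - w (Fin.last (m+1))) * z j) * w j
        else 0) = (fun k => if k = Fin.last (m+1) then 1 else w k) := by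
      funext k
      by_cases hk : k = Fin.last (m+1)
      · simp only [hk, if_true, hS]
        abel
      · simp only [if_neg hk, add_zero]
    rwa [e] at h
  -- step 3 : clear the other coordinates
  have h3 : EReach (fun k => if k = Fin.last (m+1) then 1 else w k)
      (fun k => if k = Fin.last (m+1) then (1:R) else 0) := by
    have h := EReach.col (Fin.last (m+1)) (Finset.univ.erase (Fin.last (m+1))) hLe
      (fun k => -(w k)) (fun k => if k = Fin.last (m+1) then 1 else w k)
    have e : (fun k => (if k = Fin.last (m+1) then 1 else w k)
        + if k ∈ Finset.univ.erase (Fin.last (m+1))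
          then (-(w k)) * (if (Fin.last (m+1) : Fin (m+2)) = Fin.last (m+1) then 1
            else w (Fin.last (m+1))) else 0)
        = (fun k => if k = Fin.last (m+1) then (1:R) else 0) := by
      funext k
      by_cases hk : k = Fin.last (m+1)
      · rw [if_neg (show k ∉ Finset.univ.erase (Fin.last (m+1)) from by rw [hk]; exact hLe), if_pos hk, if_pos hk, add_zero]
      · rw [if_pos (Finset.mem_erase.2 ⟨hk, Finset.mem_univ k⟩), if_neg hk, if_neg hk,
          if_pos rfl, mul_one]
        abel
    rwa [e] at h
  -- step 4 : move 1 to the first coordinate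
  have h4 : EReach (fun k => if k = Fin.last (m+1) then (1:R) else 0)
      (fun k => if k = Fin.last (m+1) then (1:R) else if k = 0 then 1 else 0) := by
    have h := EReach.single (show (0 : Fin (m+2)) ≠ Fin.last (m+1) from Ne.symm hL0) 1
      (fun k => if k = Fin.last (m+1) then (1:R) else 0)
    have e : (fun k => (if k = Fin.last (m+1) then (1:R) else 0)
        + if k = 0 then 1 * (if (Fin.last (m+1) : Fin (m+2)) = Fin.last (m+1) then (1:R)
          else 0) else 0)
        = (fun k => if k = Fin.last (m+1) then (1:R) else if k = 0 then 1 else 0) := by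
      funext k
      by_cases hk0 : k = 0
      · rw [if_pos hk0, if_pos rfl, if_neg (by rw [hk0]; exact Ne.symm hL0),
          if_neg (by rw [hk0]; exact Ne.symm hL0), if_pos hk0, mul_one, zero_add]
      · rw [if_neg hk0, if_neg hk0, add_zero]
    rwa [e] at h
  -- step 5 : clear the last coordinate
  have h5 : EReach (fun k => if k = Fin.last (m+1) then (1:R) else if k = 0 then 1 else 0)
      (Pi.single 0 1) := by
    have h := EReach.single (show (Fin.last (m+1) : Fin (m+2)) ≠ 0 from hL0) (-1)
      (fun k => if k = Fin.last (m+1) then (1:R) else if k = 0 then 1 else 0)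
    have e : (fun k => (if k = Fin.last (m+1) then (1:R) else if k = 0 then 1 else 0)
        + if k = Fin.last (m+1) then (-1) * (if (0 : Fin (m+2)) = Fin.last (m+1) then (1:R)
          else if (0 : Fin (m+2)) = 0 then 1 else 0) else 0)
        = Pi.single 0 1 := by
      funext k
      by_cases hk : k = Fin.last (m+1)
      · rw [if_pos hk, if_pos hk, if_neg (Ne.symm hL0), if_pos rfl, mul_one, hk,
          (by simp [hL0] : Pi.single (M := fun _ : Fin (m+2) => R) 0 1 (Fin.last (m+1)) = 0)]
        abel
      · rw [if_neg hk, if_neg hk, add_zero]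
        by_cases hk0 : k = 0
        · rw [if_pos hk0, hk0, (by simp : Pi.single (M := fun _ : Fin (m+2) => R) 0 1 0 = 1)]
        · rw [if_neg hk0, (by simp [hk0] : Pi.single (M := fun _ : Fin (m+2) => R) 0 1 k = 0)]
    rwa [e] at h
  exact ((h1.trans h2).trans h3).trans (h4.trans h5)

lemma rel_reach {r : ℕ} (hSR : SatisfiesSR R r) (hr : r ≤ m + 2) (x : Fin (m+2) → R)
    (hx : IsUnimodular R x) (h0 : x 0 - 1 ∈ q) (hq : ∀ k, k ≠ 0 → x k ∈ q) :
    CReach q x (Pi.single 0 1) := by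
  have hL0 : (Fin.last (m+1) : Fin (m+2)) ≠ 0 := by simp [Fin.ext_iff]
  have hLe : (Fin.last (m+1) : Fin (m+2)) ∉ Finset.univ.erase (Fin.last (m+1)) :=
    Finset.notMem_erase _ _
  obtain ⟨c, z, hcL, hzL, hsum⟩ := sr_step hSR hr x hx
  refine CReach.transport_col (Fin.last (m+1)) (Finset.univ.erase (Fin.last (m+1))) hLe c ?_
  have eB : (fun k => Pi.single (M := fun _ : Fin (m+2) => R) 0 1 k
      + if k ∈ Finset.univ.erase (Fin.last (m+1))
        then c k * Pi.single (M := fun _ : Fin (m+2) => R) 0 1 (Fin.last (m+1)) else 0)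
      = Pi.single 0 1 := by
    funext k
    rw [(by simp [hL0] : Pi.single (M := fun _ : Fin (m+2) => R) 0 1 (Fin.last (m+1)) = 0),
      mul_zero, ite_self, add_zero]
  rw [eB]
  have h0L : (0 : Fin (m+2)) ∈ Finset.univ.erase (Fin.last (m+1)) :=
    Finset.mem_erase.2 ⟨Ne.symm hL0, Finset.mem_univ 0⟩
  refine key_rel _ z ?_ ?_ ?_
  · calc ∑ k ∈ Finset.univ.erase (Fin.last (m+1)), z k
        * (x k + if k ∈ Finset.univ.erase (Fin.last (m+1))
            then c k * x (Fin.last (m+1)) else 0)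
        = ∑ k ∈ Finset.univ.erase (Fin.last (m+1)), z k
            * (x k + c k * x (Fin.last (m+1))) := by
          refine Finset.sum_congr rfl fun k hk => ?_
          rw [if_pos hk]
      _ = 1 := hsum
  · have e : (x 0 + if (0 : Fin (m+2)) ∈ Finset.univ.erase (Fin.last (m+1))
        then c 0 * x (Fin.last (m+1)) else 0) - 1
        = (x 0 - 1) + c 0 * x (Fin.last (m+1)) := by
      rw [if_pos h0L]
      abel
    rw [e]
    exact q.add_mem h0 (q.mul_mem_left _ _ (hq _ hL0))
  · intro k hk
    by_cases hkL : k = Fin.last (m+1)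
    · rw [if_neg (show k ∉ Finset.univ.erase (Fin.last (m+1)) from by rw [hkL]; exact hLe), add_zero]
      exact hq k hk
    · rw [if_pos (Finset.mem_erase.2 ⟨hkL, Finset.mem_univ k⟩)]
      exact q.add_mem (hq k hk) (q.mul_mem_left _ _ (hq _ hL0))

end Abs

/-- If `R` satisfies `(SR_r)`, `n ≥ r`, and `v, v' ∈ Rⁿ` are unimodular vectors with the
same image in `(R/q)ⁿ`, then some `M ∈ EL_n(R, q)` satisfies `M·v = v'`. -/
theorem congruenceElementary_transitive_on_unimodular (R : Type) [Ring R] (r n : ℕ)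
    (hSR : SatisfiesSR R r) (q : TwoSidedIdeal R) (hn : r ≤ n)
    (v v' : Fin n → R) (hv : IsUnimodular R v) (hv' : IsUnimodular R v')
    (hcong : ∀ i, v i - v' i ∈ q) :
    ∃ M ∈ CongruenceElementarySubgroup R n q, M.val.mulVec v = v' := by
  match n, hn, v, v', hv, hv', hcong with
  | 0, hn, v, v', hv, hv', hcong =>
    exact ⟨1, one_mem _, funext fun i => i.elim0⟩
  | 1, hn, v, v', hv, hv', hcong =>
    have hall := subsingleton_ring_of_SR hSR hn
    exact ⟨1, one_mem _, funext fun i => hall _ _⟩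
  | (m+2), hn, v, v', hv, hv', hcong =>
    obtain ⟨h, hhEL, hhv'⟩ := abs_reach hSR hn v' hv'
    have hL0 : (Fin.last (m+1) : Fin (m+2)) ≠ 0 := by simp [Fin.ext_iff]
    have hy : IsUnimodular R (h.val.mulVec v) := isUnimodular_mulVec h hv
    have hcong' : ∀ k, h.val.mulVec v k - h.val.mulVec v' k ∈ q := by
      intro k
      have e : h.val.mulVec v k - h.val.mulVec v' k = ∑ l, h.val k l * (v l - v' l) := by
        simp [Matrix.mulVec, dotProduct, mul_sub, Finset.sum_sub_distrib]
      rw [e]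
      exact sum_mem fun l _ => q.mul_mem_left _ _ (hcong l)
    have h0' : h.val.mulVec v 0 - 1 ∈ q := by
      have hc := hcong' 0
      rwa [hhv', (by simp : Pi.single (M := fun _ : Fin (m+2) => R) 0 1 0 = 1)] at hc
    have hq' : ∀ k, k ≠ 0 → h.val.mulVec v k ∈ q := by
      intro k hk
      have hc := hcong' k
      rwa [hhv', (by simp [hk] : Pi.single (M := fun _ : Fin (m+2) => R) 0 1 k = 0),
        sub_zero] at hc
    have hrel := rel_reach hSR hn (h.val.mulVec v) hy h0' hq'
    rw [← hhv'] at hrel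
    exact CReach.transport hhEL hrel
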